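/- The trace norm of the realignment equals the sum of the operator Schmidt coefficients: if a bipartite matrix ρ on ℂ^{d_A} ⊗ ℂ^{d_B} admits an operator Schmidt decomposition ρ = Σ_{i=1}^r λ_i A_i ⊗ B_i with λ_i ≥ 0 and {A_i}, {B_i} orthonormal families with respect to the Hilbert–Schmidt inner product, then ‖R(ρ)‖_tr = Σ_{i=1}^r λ_i. -/

import Mathlib

open Matrix Kronecker ComplexOrder

/-- Trace norm `‖X‖_tr = Tr √(X Xᴴ)`. -/
noncomputable def traceNorm {m n : Type*} [Fintype m] [Fintype n] [DecidableEq m]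
    (X : Matrix m n ℂ) : ℝ :=
  ((((Matrix.posSemidef_self_mul_conjTranspose X).1.eigenvectorUnitary : Matrix m m ℂ) *
      diagonal (((↑) : ℝ → ℂ) ∘ Real.sqrt ∘ (Matrix.posSemidef_self_mul_conjTranspose X).1.eigenvalues) *
      (star (Matrix.posSemidef_self_mul_conjTranspose X).1.eigenvectorUnitary : Matrix m m ℂ)).trace).re

/-- A density matrix: positive semidefinite with trace 1. -/
def IsDensityMatrix {n : Type*} [Fintype n] (ρ : Matrix n n ℂ) : Prop :=
  ρ.PosSemidef ∧ ρ.trace = 1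

/-- The realignment map: `R(ρ)_{(i,j),(k,l)} = ρ_{(i,k),(j,l)}`. -/
def realign {dA dB : ℕ} (ρ : Matrix (Fin dA × Fin dB) (Fin dA × Fin dB) ℂ) :
    Matrix (Fin dA × Fin dA) (Fin dB × Fin dB) ℂ :=
  fun p q => ρ (p.1, q.1) (p.2, q.2)

/-- Partial transpose on the second subsystem: `(ρ^{T₂})_{(i,k),(j,l)} = ρ_{(i,l),(j,k)}`. -/
def ptranspose2 {d : ℕ} (ρ : Matrix (Fin d × Fin d) (Fin d × Fin d) ℂ) :
    Matrix (Fin d × Fin d) (Fin d × Fin d) ℂ :=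
  fun p q => ρ (p.1, q.2) (q.1, p.2)

/-- The swap (exchange) operator `F_{(i,k),(j,l)} = δ_{il} δ_{kj}`. -/
def swapOp (d : ℕ) : Matrix (Fin d × Fin d) (Fin d × Fin d) ℂ :=
  fun p q => if p.1 = q.2 ∧ p.2 = q.1 then 1 else 0

/-- The unnormalized maximally entangled projector `(|Ω⟩⟨Ω|)_{(i,k),(j,l)} = δ_{ik} δ_{jl}`. -/
def omegaProj (d : ℕ) : Matrix (Fin d × Fin d) (Fin d × Fin d) ℂ :=
  fun p q => if p.1 = p.2 ∧ q.1 = q.2 then 1 else 0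

/-- Separability: `ρ` is a finite convex combination of products of density matrices. -/
def IsSeparableState {dA dB : ℕ} (ρ : Matrix (Fin dA × Fin dB) (Fin dA × Fin dB) ℂ) : Prop :=
  ∃ (m : ℕ) (p : Fin m → ℝ) (σ : Fin m → Matrix (Fin dA) (Fin dA) ℂ)
    (τ : Fin m → Matrix (Fin dB) (Fin dB) ℂ),
    (∀ k, 0 ≤ p k) ∧ (∑ k, p k = 1) ∧ (∀ k, IsDensityMatrix (σ k)) ∧
    (∀ k, IsDensityMatrix (τ k)) ∧ ρ = ∑ k, (p k : ℂ) • (σ k ⊗ₖ τ k)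


open scoped ComplexConjugate

private lemma ortho_sum {α β : Type*} [Fintype α] [Fintype β] {r : ℕ}
    (f g : Fin r → α → β → ℂ) (u v : Fin r → ℂ)
    (h : ∀ i j, ∑ t : α × β, f i t.1 t.2 * g j t.1 t.2 = if i = j then 1 else 0) :
    ∑ t : α × β, (∑ i, u i * f i t.1 t.2) * (∑ j, v j * g j t.1 t.2) = ∑ i, u i * v i := by
  have e1 : ∀ t : α × β, (∑ i, u i * f i t.1 t.2) * (∑ j, v j * g j t.1 t.2)
      = ∑ i, ∑ j, (u i * v j) * (f i t.1 t.2 * g j t.1 t.2) := fun t => by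
    rw [Finset.sum_mul_sum]
    exact Finset.sum_congr rfl fun i _ => Finset.sum_congr rfl fun j _ => by ring
  simp_rw [e1]
  rw [Finset.sum_comm]
  refine Finset.sum_congr rfl fun i _ => ?_
  rw [Finset.sum_comm]
  calc ∑ j, ∑ t : α × β, (u i * v j) * (f i t.1 t.2 * g j t.1 t.2)
      = ∑ j, (u i * v j) * (if i = j then 1 else 0) := by
        refine Finset.sum_congr rfl fun j _ => ?_
        rw [← Finset.mul_sum, h i j]
    _ = u i * v i := by simp

private lemma htr {d : ℕ} (M N : Matrix (Fin d) (Fin d) ℂ) :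
    (Mᴴ * N).trace = ∑ t : Fin d × Fin d, conj (M t.1 t.2) * N t.1 t.2 := by
  rw [Matrix.trace]
  simp only [Matrix.diag, Matrix.mul_apply, Matrix.conjTranspose_apply, Fintype.sum_prod_type,
    starRingEnd_apply]
  rw [Finset.sum_comm]

set_option maxHeartbeats 1000000 in
/-- The trace norm of the realignment equals the sum of the operator Schmidt
coefficients. -/
theorem traceNorm_realign_eq_sum_schmidt_coeffs {dA dB : ℕ}
    (ρ : Matrix (Fin dA × Fin dB) (Fin dA × Fin dB) ℂ)
    (r : ℕ) (lam : Fin r → ℝ)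
    (A : Fin r → Matrix (Fin dA) (Fin dA) ℂ)
    (B : Fin r → Matrix (Fin dB) (Fin dB) ℂ)
    (hlam : ∀ i, 0 ≤ lam i)
    (hA : ∀ i j, ((A i)ᴴ * A j).trace = if i = j then 1 else 0)
    (hB : ∀ i j, ((B i)ᴴ * B j).trace = if i = j then 1 else 0)
    (hdec : ρ = ∑ i, (lam i : ℂ) • (A i ⊗ₖ B i)) :
    traceNorm (realign ρ) = ∑ i, lam i := by
  have hAsum : ∀ i j, ∑ t : Fin dA × Fin dA, conj (A i t.1 t.2) * A j t.1 t.2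
      = if i = j then 1 else 0 := fun i j => by rw [← htr, hA]
  have hBsum : ∀ i j, ∑ t : Fin dB × Fin dB, conj (B i t.1 t.2) * B j t.1 t.2
      = if i = j then 1 else 0 := fun i j => by rw [← htr, hB]
  have hBsum' : ∀ i j, ∑ t : Fin dB × Fin dB, B i t.1 t.2 * conj (B j t.1 t.2)
      = if i = j then 1 else 0 := by
    intro i j
    calc ∑ t : Fin dB × Fin dB, B i t.1 t.2 * conj (B j t.1 t.2)
        = ∑ t : Fin dB × Fin dB, conj (B j t.1 t.2) * B i t.1 t.2 :=
          Finset.sum_congr rfl fun t _ => mul_comm _ _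
      _ = if j = i then 1 else 0 := hBsum j i
      _ = if i = j then 1 else 0 := by simp [eq_comm]
  have hX : ∀ p t, realign ρ p t = ∑ i, ((lam i : ℂ) * A i p.1 p.2) * B i t.1 t.2 := by
    intro p t
    simp [realign, hdec, Matrix.sum_apply, Matrix.kroneckerMap_apply, mul_assoc]
  set W : Matrix (Fin dA × Fin dA) (Fin r) ℂ :=
    fun p i => ((Real.sqrt (lam i) : ℂ)) * A i p.1 p.2 with hW
  set S : Matrix (Fin dA × Fin dA) (Fin dA × Fin dA) ℂ := W * Wᴴ with hSdef
  have hSentry : ∀ p q, S p q = ∑ i, ((lam i : ℂ) * A i p.1 p.2) * conj (A i q.1 q.2) := by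
    intro p q
    rw [hSdef, Matrix.mul_apply]
    refine Finset.sum_congr rfl fun i _ => ?_
    change ((Real.sqrt (lam i) : ℂ)) * A i p.1 p.2 * star (((Real.sqrt (lam i) : ℂ)) * A i q.1 q.2) = _
    simp only [star_mul', Complex.star_def, Complex.conj_ofReal]
    rw [show ((Real.sqrt (lam i) : ℂ)) * A i p.1 p.2 *
        ((Real.sqrt (lam i) : ℂ) * conj (A i q.1 q.2))
      = (((Real.sqrt (lam i) * Real.sqrt (lam i) : ℝ) : ℂ)) * A i p.1 p.2 * conj (A i q.1 q.2) by
        push_cast; ring]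
    rw [Real.mul_self_sqrt (hlam i)]
  have hS_psd : S.PosSemidef := Matrix.posSemidef_self_mul_conjTranspose W
  have hsq : S * S = realign ρ * (realign ρ)ᴴ := by
    ext p q
    rw [Matrix.mul_apply, Matrix.mul_apply]
    have L : ∑ t, S p t * S t q
        = ∑ i, ((lam i : ℂ) * A i p.1 p.2) * ((lam i : ℂ) * conj (A i q.1 q.2)) := by
      have e : ∀ t : Fin dA × Fin dA, S p t * S t q
          = (∑ i, ((lam i : ℂ) * A i p.1 p.2) * conj (A i t.1 t.2)) *
            (∑ j, ((lam j : ℂ) * conj (A j q.1 q.2)) * A j t.1 t.2) := by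
        intro t
        rw [hSentry p t, hSentry t q]
        congr 1
        exact Finset.sum_congr rfl fun j _ => by ring
      simp_rw [e]
      exact ortho_sum (fun i k l => conj (A i k l)) (fun j k l => A j k l)
        (fun i => (lam i : ℂ) * A i p.1 p.2) (fun j => (lam j : ℂ) * conj (A j q.1 q.2)) hAsum
    have R : ∑ t, realign ρ p t * (realign ρ)ᴴ t q
        = ∑ i, ((lam i : ℂ) * A i p.1 p.2) * ((lam i : ℂ) * conj (A i q.1 q.2)) := by
      have e : ∀ t : Fin dB × Fin dB, realign ρ p t * (realign ρ)ᴴ t q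
          = (∑ i, ((lam i : ℂ) * A i p.1 p.2) * B i t.1 t.2) *
            (∑ j, ((lam j : ℂ) * conj (A j q.1 q.2)) * conj (B j t.1 t.2)) := by
        intro t
        rw [Matrix.conjTranspose_apply, ← starRingEnd_apply, hX p t, hX q t, map_sum]
        congr 1
        refine Finset.sum_congr rfl fun j _ => ?_
        simp only [_root_.map_mul, Complex.conj_ofReal]
      simp_rw [e]
      exact ortho_sum (fun i k l => B i k l) (fun j k l => conj (B j k l))
        (fun i => (lam i : ℂ) * A i p.1 p.2) (fun j => (lam j : ℂ) * conj (A j q.1 q.2)) hBsum'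
    rw [L, R]
  have hsqrt : S = ((Matrix.posSemidef_self_mul_conjTranspose (realign ρ)).1.eigenvectorUnitary
      : Matrix _ _ ℂ) * diagonal (((↑) : ℝ → ℂ) ∘ Real.sqrt ∘
        (Matrix.posSemidef_self_mul_conjTranspose (realign ρ)).1.eigenvalues) *
      (star (Matrix.posSemidef_self_mul_conjTranspose (realign ρ)).1.eigenvectorUnitary
      : Matrix _ _ ℂ) := by
    have hH := (Matrix.posSemidef_self_mul_conjTranspose (realign ρ)).1
    have e := Matrix.IsHermitian.cfc_eq hH Real.sqrt
    rw [Matrix.IsHermitian.cfc, Unitary.conjStarAlgAut_apply] at e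
    have hS1 : IsSelfAdjoint S := hS_psd.1.isSelfAdjoint
    have key : S = cfc Real.sqrt (realign ρ * (realign ρ)ᴴ) := by
     rw [← hsq, ← sq, ← cfc_comp_pow Real.sqrt 2 S (by fun_prop) hS1]
     calc S = cfc (id : ℝ → ℝ) S := (cfc_id ℝ S hS1).symm
      _ = _ := by
        apply cfc_congr
        intro x hx
        rw [hS_psd.1.spectrum_real_eq_range_eigenvalues] at hx
        obtain ⟨i, rfl⟩ := hx
        simp [Real.sqrt_sq (hS_psd.eigenvalues_nonneg i)]
    exact key.trans e
  rw [traceNorm, ← hsqrt]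
  have htrS : S.trace = ∑ i, (lam i : ℂ) := by
    rw [Matrix.trace]
    calc ∑ p, S.diag p = ∑ p, S p p := rfl
      _ = ∑ p, ∑ i, ((lam i : ℂ) * A i p.1 p.2) * conj (A i p.1 p.2) :=
          Finset.sum_congr rfl fun p _ => hSentry p p
      _ = ∑ i, (lam i : ℂ) * ∑ p : Fin dA × Fin dA, conj (A i p.1 p.2) * A i p.1 p.2 := by
          rw [Finset.sum_comm]
          refine Finset.sum_congr rfl fun i _ => ?_
          rw [Finset.mul_sum]
          exact Finset.sum_congr rfl fun p _ => by ring
      _ = ∑ i, (lam i : ℂ) := by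
          refine Finset.sum_congr rfl fun i _ => ?_
          rw [hAsum i i]
          simp
  rw [htrS, ← Complex.ofReal_sum, Complex.ofReal_re]
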